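/- Suppose the maps ω ↦ Π_n(ω,R) converge uniformly on Ω_R, as n → +∞, to a map V : Ω_R → S_d; suppose A(i)·V(ω) ≠ 0 for every i ∈ {0,…,a} and every ω ∈ Ω_R; suppose (A(0)+⋯+A(a))·R = R; and let L ∈ ℝ^d be a column vector with all entries positive and L^T·R = 1. Then: (1) the potentials φ_n(ω) := log( L^T A(ω_1⋯ω_n) R / L^T A(ω_2⋯ω_n) R ) converge uniformly on Ω_R to φ(ω) := log( L^T A(ω_1) V(σ·ω) / L^T V(σ·ω) ); (2) consequently, if μ is a Borel probability measure on {0,…,a}^ℕ satisfying μ[w_1⋯w_n] = L^T A(w_1⋯w_n) R for every finite word w_1⋯w_n, then μ is a weak Gibbs measure for φ: there exist constants K_n > 0 with (1/n)·log K_n → 0 such that K_n^{-1} ≤ μ[ω_1⋯ω_n] / exp( Σ_{k=0}^{n−1} φ(σ^k·ω) ) ≤ K_n for every ω ∈ Ω_R and n ≥ 1. -/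

import Mathlib

open Matrix Filter Finset Topology MeasureTheory

/-- ℓ¹-norm (sum of absolute values of the entries) of a vector. -/
noncomputable def l1 {d : ℕ} (v : Fin d → ℝ) : ℝ := ∑ i, |v i|

/-- Normalization of a vector by its ℓ¹-norm. -/
noncomputable def nrm {d : ℕ} (v : Fin d → ℝ) : Fin d → ℝ := (l1 v)⁻¹ • v

/-- Probability vector: nonnegative entries summing to `1`. -/
def probVec {d : ℕ} (X : Fin d → ℝ) : Prop := (∀ i, 0 ≤ X i) ∧ ∑ i, X i = 1

/-- `A(ω_1 ⋯ ω_n) = A(ω_1) * ⋯ * A(ω_n)`. -/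
noncomputable def wordProd {d a : ℕ} (A : Fin (a + 1) → Matrix (Fin d) (Fin d) ℝ)
    (ω : ℕ → Fin (a + 1)) (n : ℕ) : Matrix (Fin d) (Fin d) ℝ :=
  ((List.range n).map fun k => A (ω k)).prod

/-- `Ω_R` : the set of sequences `ω` such that `A(ω_1⋯ω_n) R ≠ 0` for every `n ≥ 1`. -/
def OmegaR {d a : ℕ} (A : Fin (a + 1) → Matrix (Fin d) (Fin d) ℝ) (R : Fin d → ℝ) :
    Set (ℕ → Fin (a + 1)) :=
  {ω | ∀ n, 1 ≤ n → wordProd A ω n *ᵥ R ≠ 0}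

/-- The cylinder set `[ω_1 ⋯ ω_n]`. -/
def cylSet {α : Type*} (ω : ℕ → α) (n : ℕ) : Set (ℕ → α) := {ξ | ∀ k < n, ξ k = ω k}

namespace LinRepAux

variable {d a : ℕ}

/-- shift by k -/
def sh (k : ℕ) (ω : ℕ → Fin (a + 1)) : ℕ → Fin (a + 1) := fun i => ω (i + k)

lemma sh_one (ω : ℕ → Fin (a + 1)) : sh 1 ω = fun k => ω (k + 1) := rfl

lemma sh_sh (k : ℕ) (ω : ℕ → Fin (a + 1)) : sh 1 (sh k ω) = sh (k + 1) ω := by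
  funext i; show ω (i + 1 + k) = ω (i + (k + 1)); congr 1; omega

lemma sh_zero (ω : ℕ → Fin (a + 1)) : sh 0 ω = ω := by funext i; show ω (i + 0) = ω i; congr 1

lemma wordProd_zero (A : Fin (a + 1) → Matrix (Fin d) (Fin d) ℝ) (ω : ℕ → Fin (a + 1)) :
    wordProd A ω 0 = 1 := by simp [wordProd]

lemma wordProd_succ_front (A : Fin (a + 1) → Matrix (Fin d) (Fin d) ℝ) (ω : ℕ → Fin (a + 1))
    (n : ℕ) : wordProd A ω (n + 1) = A (ω 0) * wordProd A (sh 1 ω) n := by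
  simp only [wordProd, List.range_succ_eq_map, List.map_cons, List.map_map, List.prod_cons, sh]
  rfl

lemma wordProd_succ_back (A : Fin (a + 1) → Matrix (Fin d) (Fin d) ℝ) (ω : ℕ → Fin (a + 1))
    (n : ℕ) : wordProd A ω (n + 1) = wordProd A ω n * A (ω n) := by
  simp [wordProd, List.range_succ]

lemma P_succ_front (A : Fin (a + 1) → Matrix (Fin d) (Fin d) ℝ) (R : Fin d → ℝ)
    (ω : ℕ → Fin (a + 1)) (n : ℕ) :
    wordProd A ω (n + 1) *ᵥ R = A (ω 0) *ᵥ (wordProd A (sh 1 ω) n *ᵥ R) := by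
  rw [wordProd_succ_front, mulVec_mulVec]

lemma mulVec_nonneg {M : Matrix (Fin d) (Fin d) ℝ} {v : Fin d → ℝ}
    (hM : ∀ p q, 0 ≤ M p q) (hv : ∀ q, 0 ≤ v q) : ∀ p, 0 ≤ (M *ᵥ v) p := by
  intro p
  simp only [mulVec, dotProduct]
  exact Finset.sum_nonneg fun q _ => mul_nonneg (hM p q) (hv q)

lemma P_nonneg (A : Fin (a + 1) → Matrix (Fin d) (Fin d) ℝ) (hnn : ∀ i p q, 0 ≤ A i p q)
    (R : Fin d → ℝ) (hR : ∀ i, 0 ≤ R i) :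
    ∀ (n : ℕ) (ω : ℕ → Fin (a + 1)) (p : Fin d), 0 ≤ (wordProd A ω n *ᵥ R) p := by
  intro n
  induction n with
  | zero => intro ω p; simpa [wordProd_zero, one_mulVec] using hR p
  | succ n ih =>
    intro ω p
    rw [P_succ_front]
    exact mulVec_nonneg (hnn (ω 0)) (fun q => ih (sh 1 ω) q) p

lemma sh_one_mem (A : Fin (a + 1) → Matrix (Fin d) (Fin d) ℝ) (R : Fin d → ℝ)
    {ω : ℕ → Fin (a + 1)} (hω : ω ∈ OmegaR A R) : sh 1 ω ∈ OmegaR A R := by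
  intro n hn h0
  exact hω (n + 1) (by omega) (by rw [P_succ_front, h0, mulVec_zero])

lemma sh_mem (A : Fin (a + 1) → Matrix (Fin d) (Fin d) ℝ) (R : Fin d → ℝ)
    {ω : ℕ → Fin (a + 1)} (hω : ω ∈ OmegaR A R) : ∀ k, sh k ω ∈ OmegaR A R := by
  intro k
  induction k with
  | zero => rwa [sh_zero]
  | succ k ih => rw [← sh_sh]; exact sh_one_mem A R ih

lemma dot_pos {L v : Fin d → ℝ} (hL : ∀ i, 0 < L i) (hv : ∀ i, 0 ≤ v i) (hv0 : v ≠ 0) :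
    0 < L ⬝ᵥ v := by
  obtain ⟨i, hi⟩ : ∃ i, v i ≠ 0 := Function.ne_iff.mp hv0
  refine Finset.sum_pos' (fun j _ => mul_nonneg (hL j).le (hv j)) ⟨i, Finset.mem_univ i, ?_⟩
  exact mul_pos (hL i) ((hv i).lt_of_ne' hi)


lemma R_ne_zero {R : Fin d → ℝ} (hR : probVec R) : R ≠ 0 := by
  intro h; rw [h] at hR; simpa using hR.2

lemma P_ne_zero (A : Fin (a + 1) → Matrix (Fin d) (Fin d) ℝ) {R : Fin d → ℝ} (hR : probVec R)
    {ω : ℕ → Fin (a + 1)} (hω : ω ∈ OmegaR A R) (n : ℕ) : wordProd A ω n *ᵥ R ≠ 0 := by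
  rcases Nat.eq_zero_or_pos n with h | h
  · subst h; rw [wordProd_zero, one_mulVec]; exact R_ne_zero hR
  · exact hω n h

lemma l1_eq_sum {v : Fin d → ℝ} (hv : ∀ i, 0 ≤ v i) : l1 v = ∑ i, v i := by
  simp only [l1]; exact Finset.sum_congr rfl fun i _ => abs_of_nonneg (hv i)

lemma l1_pos {v : Fin d → ℝ} (hv : ∀ i, 0 ≤ v i) (hv0 : v ≠ 0) : 0 < l1 v := by
  obtain ⟨i, hi⟩ : ∃ i, v i ≠ 0 := Function.ne_iff.mp hv0
  refine Finset.sum_pos' (fun j _ => abs_nonneg _) ⟨i, Finset.mem_univ i, ?_⟩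
  exact abs_pos.mpr hi

lemma nrm_probVec {v : Fin d → ℝ} (hv : ∀ i, 0 ≤ v i) (hv0 : v ≠ 0) : probVec (nrm v) := by
  have h1 : 0 < l1 v := l1_pos hv hv0
  constructor
  · intro i; exact mul_nonneg (inv_nonneg.mpr h1.le) (hv i)
  · simp only [nrm, Pi.smul_apply, smul_eq_mul, ← Finset.mul_sum]
    rw [← l1_eq_sum hv, inv_mul_cancel₀ h1.ne']

lemma dot_ge_min {L v : Fin d → ℝ} (hv : probVec v)
    (H : (Finset.univ : Finset (Fin d)).Nonempty) :
    Finset.univ.inf' H L ≤ L ⬝ᵥ v := by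
  set m := Finset.univ.inf' H L with hm
  calc m = m * ∑ i, v i := by rw [hv.2, mul_one]
    _ = ∑ i, m * v i := by rw [Finset.mul_sum]
    _ ≤ ∑ i, L i * v i := by
        refine Finset.sum_le_sum fun i _ => mul_le_mul_of_nonneg_right ?_ (hv.1 i)
        exact Finset.inf'_le _ (Finset.mem_univ i)
    _ = L ⬝ᵥ v := rfl

lemma isClosed_probVec : IsClosed {v : Fin d → ℝ | probVec v} := by
  have h1 : IsClosed {v : Fin d → ℝ | ∀ i, 0 ≤ v i} := by
    have : {v : Fin d → ℝ | ∀ i, 0 ≤ v i} = ⋂ i, {v | 0 ≤ v i} := by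
      ext v; simp [Set.mem_iInter]
    rw [this]
    exact isClosed_iInter fun i => isClosed_le continuous_const (continuous_apply i)
  have h2 : IsClosed {v : Fin d → ℝ | ∑ i, v i = 1} :=
    isClosed_eq (by exact continuous_finset_sum _ fun i _ => continuous_apply i) continuous_const
  have : {v : Fin d → ℝ | probVec v} = {v | ∀ i, 0 ≤ v i} ∩ {v | ∑ i, v i = 1} := rfl
  rw [this]; exact h1.inter h2


lemma continuous_wordProd (A : Fin (a + 1) → Matrix (Fin d) (Fin d) ℝ) (n : ℕ) :
    Continuous fun ω : ℕ → Fin (a + 1) => wordProd A ω n := by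
  induction n with
  | zero => simpa [wordProd_zero] using continuous_const
  | succ n ih =>
    have h1 : Continuous fun ω : ℕ → Fin (a + 1) => A (ω n) :=
      continuous_of_discreteTopology.comp (continuous_apply n)
    have := ih.matrix_mul h1
    simpa only [← wordProd_succ_back] using this

lemma continuous_P (A : Fin (a + 1) → Matrix (Fin d) (Fin d) ℝ) (R : Fin d → ℝ) (n : ℕ) :
    Continuous fun ω : ℕ → Fin (a + 1) => wordProd A ω n *ᵥ R :=
  (continuous_wordProd A n).matrix_mulVec continuous_const

lemma continuous_l1 : Continuous fun v : Fin d → ℝ => l1 v := by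
  exact continuous_finset_sum _ fun i _ => (continuous_apply i).abs

lemma continuous_dot (L : Fin d → ℝ) : Continuous fun v : Fin d → ℝ => L ⬝ᵥ v := by
  exact continuous_finset_sum _ fun i _ => continuous_const.mul (continuous_apply i)

lemma continuous_dotA (L : Fin d → ℝ) (M : Matrix (Fin d) (Fin d) ℝ) :
    Continuous fun v : Fin d → ℝ => L ⬝ᵥ (M *ᵥ v) :=
  (continuous_dot L).comp (continuous_const.matrix_mulVec continuous_id)

lemma continuousOn_nrmP (A : Fin (a + 1) → Matrix (Fin d) (Fin d) ℝ)
    (hnn : ∀ i p q, 0 ≤ A i p q) {R : Fin d → ℝ} (hR : probVec R) (n : ℕ) :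
    ContinuousOn (fun ω => nrm (wordProd A ω n *ᵥ R)) (OmegaR A R) := by
  have hP := continuous_P A R n
  have hl : ContinuousOn (fun ω => (l1 (wordProd A ω n *ᵥ R))⁻¹) (OmegaR A R) := by
    refine ContinuousOn.inv₀ (continuous_l1.comp hP).continuousOn fun ω hω => ?_
    exact (l1_pos (P_nonneg A hnn R hR.1 n ω) (P_ne_zero A hR hω n)).ne'
  exact hl.smul hP.continuousOn

lemma isCompact_OmegaR (A : Fin (a + 1) → Matrix (Fin d) (Fin d) ℝ) (R : Fin d → ℝ) :
    IsCompact (OmegaR A R) := by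
  have hclosed : IsClosed (OmegaR A R) := by
    have : OmegaR A R = ⋂ n, ⋂ (_ : 1 ≤ n), {ω | wordProd A ω n *ᵥ R ≠ 0} := by
      ext ω; simp only [OmegaR, Set.mem_setOf_eq, Set.mem_iInter]
    rw [this]
    refine isClosed_iInter fun n => isClosed_iInter fun _ => ?_
    have hfact : {ω : ℕ → Fin (a + 1) | wordProd A ω n *ᵥ R ≠ 0} =
        (fun ω (i : Fin n) => ω (i : ℕ)) ⁻¹'
          {w : Fin n → Fin (a + 1) |
            ((List.range n).map fun k => if h : k < n then A (w ⟨k, h⟩) else 1).prod *ᵥ R ≠ 0} := by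
      ext ω
      simp only [Set.mem_setOf_eq, Set.mem_preimage]
      have : ((List.range n).map fun k =>
          if h : k < n then A (ω (((⟨k, h⟩ : Fin n) : ℕ))) else 1).prod = wordProd A ω n := by
        unfold wordProd
        congr 1
        refine List.map_congr_left fun k hk => ?_
        rw [dif_pos (List.mem_range.mp hk)]
      rw [this]
    rw [hfact]
    exact IsClosed.preimage (f := fun (ω : ℕ → Fin (a + 1)) (i : Fin n) => ω (i : ℕ))
      (continuous_pi fun i => continuous_apply (i : ℕ)) (isClosed_discrete _)
  exact hclosed.isCompact


lemma abs_log_sub_log_le {x y c : ℝ} (hc : 0 < c) (hx : c ≤ x) (hy : c ≤ y) :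
    |Real.log x - Real.log y| ≤ |x - y| / c := by
  have key : ∀ u v : ℝ, c ≤ u → c ≤ v → v ≤ u → Real.log u - Real.log v ≤ (u - v) / c := by
    intro u v hu hv huv
    have hv0 : 0 < v := hc.trans_le hv
    have hu0 : 0 < u := hc.trans_le hu
    rw [← Real.log_div hu0.ne' hv0.ne']
    have h1 : Real.log (u / v) ≤ u / v - 1 := Real.log_le_sub_one_of_pos (by positivity)
    have h2 : u / v - 1 = (u - v) / v := by field_simp
    have h3 : (u - v) / v ≤ (u - v) / c := by
      gcongr
    linarith
  rcases le_total y x with h | h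
  · have h1 := key x y hx hy h
    have h2 : 0 ≤ Real.log x - Real.log y :=
      sub_nonneg.2 (Real.log_le_log (hc.trans_le hy) h)
    rw [abs_of_nonneg h2, abs_of_nonneg (sub_nonneg.2 h)]
    exact h1
  · have h1 := key y x hy hx h
    have h2 : 0 ≤ Real.log y - Real.log x :=
      sub_nonneg.2 (Real.log_le_log (hc.trans_le hx) h)
    rw [abs_sub_comm, abs_sub_comm x y, abs_of_nonneg h2, abs_of_nonneg (sub_nonneg.2 h)]
    exact h1


lemma dot_diff_bound (L : Fin d → ℝ) (hL : ∀ i, 0 < L i) (u v : Fin d → ℝ) :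
    |L ⬝ᵥ u - L ⬝ᵥ v| ≤ (∑ p, L p) * dist u v := by
  have hstep : ∀ p, |u p - v p| ≤ dist u v := fun p => by
    rw [← Real.dist_eq]; exact dist_le_pi_dist u v p
  calc |L ⬝ᵥ u - L ⬝ᵥ v| = |∑ p, L p * (u p - v p)| := by
        simp only [dotProduct, mul_sub, Finset.sum_sub_distrib]
    _ ≤ ∑ p, |L p * (u p - v p)| := Finset.abs_sum_le_sum_abs _ _
    _ = ∑ p, L p * |u p - v p| := by
        refine Finset.sum_congr rfl fun p _ => ?_
        rw [abs_mul, abs_of_nonneg (hL p).le]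
    _ ≤ ∑ p, L p * dist u v :=
        Finset.sum_le_sum fun p _ => mul_le_mul_of_nonneg_left (hstep p) (hL p).le
    _ = (∑ p, L p) * dist u v := by rw [Finset.sum_mul]

lemma dotA_diff_bound (L : Fin d → ℝ) (hL : ∀ i, 0 < L i) (M : Matrix (Fin d) (Fin d) ℝ)
    (hM : ∀ p q, 0 ≤ M p q) (u v : Fin d → ℝ) :
    |L ⬝ᵥ (M *ᵥ u) - L ⬝ᵥ (M *ᵥ v)| ≤ (∑ p, ∑ q, L p * M p q) * dist u v := by
  have hstep : ∀ q, |u q - v q| ≤ dist u v := fun q => by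
    rw [← Real.dist_eq]; exact dist_le_pi_dist u v q
  calc |L ⬝ᵥ (M *ᵥ u) - L ⬝ᵥ (M *ᵥ v)|
      = |∑ p, L p * ∑ q, M p q * (u q - v q)| := by
        simp only [dotProduct, mulVec, mul_sub, Finset.sum_sub_distrib, Finset.mul_sum]
    _ ≤ ∑ p, |L p * ∑ q, M p q * (u q - v q)| := Finset.abs_sum_le_sum_abs _ _
    _ ≤ ∑ p, L p * ∑ q, M p q * dist u v := by
        refine Finset.sum_le_sum fun p _ => ?_
        rw [abs_mul, abs_of_nonneg (hL p).le]
        refine mul_le_mul_of_nonneg_left ?_ (hL p).le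
        refine le_trans (Finset.abs_sum_le_sum_abs _ _) ?_
        refine Finset.sum_le_sum fun q _ => ?_
        rw [abs_mul, abs_of_nonneg (hM p q)]
        exact mul_le_mul_of_nonneg_left (hstep q) (hM p q)
    _ = (∑ p, ∑ q, L p * M p q) * dist u v := by
        rw [Finset.sum_mul]
        refine Finset.sum_congr rfl fun p _ => ?_
        rw [Finset.mul_sum, Finset.sum_mul]
        exact Finset.sum_congr rfl fun q _ => by ring


set_option maxHeartbeats 1000000 in
theorem part1 (A : Fin (a + 1) → Matrix (Fin d) (Fin d) ℝ)
    (hnn : ∀ i p q, 0 ≤ A i p q)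
    (R : Fin d → ℝ) (hR : probVec R)
    (Vm : (ℕ → Fin (a + 1)) → (Fin d → ℝ))
    (hunif : TendstoUniformlyOn (fun n ω => nrm (wordProd A ω n *ᵥ R)) Vm atTop (OmegaR A R))
    (hAV : ∀ (i : Fin (a + 1)), ∀ ω ∈ OmegaR A R, A i *ᵥ Vm ω ≠ 0)
    (L : Fin d → ℝ) (hL : ∀ i, 0 < L i)
    (hNE : (OmegaR A R).Nonempty) :
    TendstoUniformlyOn
      (fun n ω => Real.log ((L ⬝ᵥ (wordProd A ω n *ᵥ R)) /
        (L ⬝ᵥ (wordProd A (fun k => ω (k + 1)) (n - 1) *ᵥ R))))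
      (fun ω => Real.log ((L ⬝ᵥ (A (ω 0) *ᵥ Vm fun k => ω (k + 1))) /
        (L ⬝ᵥ Vm fun k => ω (k + 1)))) atTop (OmegaR A R) := by
  have hd : 0 < d := by
    rcases Nat.eq_zero_or_pos d with h | h
    · subst h; simpa using hR.2
    · exact h
  haveI : Nonempty (Fin d) := ⟨⟨0, hd⟩⟩
  have hU : (Finset.univ : Finset (Fin d)).Nonempty := Finset.univ_nonempty
  set minL := Finset.univ.inf' hU L with hminLdef
  have hminL_pos : 0 < minL := by
    rw [hminLdef, Finset.lt_inf'_iff]; exact fun i _ => hL i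
  have hVS : ∀ ω ∈ OmegaR A R, probVec (Vm ω) := by
    intro ω hω
    refine isClosed_probVec.mem_of_tendsto (hunif.tendsto_at hω)
      (Filter.Eventually.of_forall fun n => ?_)
    exact nrm_probVec (P_nonneg A hnn R hR.1 n ω) (P_ne_zero A hR hω n)
  have hVc : ContinuousOn Vm (OmegaR A R) :=
    hunif.continuousOn (Filter.Eventually.of_forall fun n => continuousOn_nrmP A hnn hR n).frequently
  have hexist : ∀ i : Fin (a + 1), ∃ m, 0 < m ∧ ∀ ω ∈ OmegaR A R, m ≤ L ⬝ᵥ (A i *ᵥ Vm ω) := by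
    intro i
    have hc : ContinuousOn (fun ω => L ⬝ᵥ (A i *ᵥ Vm ω)) (OmegaR A R) :=
      (continuous_dotA L (A i)).comp_continuousOn hVc
    obtain ⟨ω0, hω0, hmin⟩ := (isCompact_OmegaR A R).exists_isMinOn hNE hc
    exact ⟨_, dot_pos hL (mulVec_nonneg (hnn i) (hVS ω0 hω0).1) (hAV i ω0 hω0),
      fun ω hω => hmin hω⟩
  choose m hm_pos hm_le using hexist
  set m0 := Finset.univ.inf' Finset.univ_nonempty m with hm0def
  have hm0_pos : 0 < m0 := by
    rw [hm0def, Finset.lt_inf'_iff]; exact fun i _ => hm_pos i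
  have hm0_le : ∀ i, ∀ ω ∈ OmegaR A R, m0 ≤ L ⬝ᵥ (A i *ᵥ Vm ω) := fun i ω hω =>
    le_trans (Finset.inf'_le _ (Finset.mem_univ i)) (hm_le i ω hω)
  set C := (∑ p, L p) + ∑ i, ∑ p, ∑ q, L p * A i p q with hCdef
  have hsum_nonneg : 0 ≤ ∑ i, ∑ p, ∑ q, L p * A i p q :=
    Finset.sum_nonneg fun i _ => Finset.sum_nonneg fun p _ => Finset.sum_nonneg fun q _ =>
      mul_nonneg (hL p).le (hnn i p q)
  have hsumL_pos : 0 < ∑ p, L p := Finset.sum_pos (fun p _ => hL p) hU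
  have hC_pos : 0 < C := by rw [hCdef]; linarith
  have hC1 : ∀ u v : Fin d → ℝ, |L ⬝ᵥ u - L ⬝ᵥ v| ≤ C * dist u v := by
    intro u v
    refine le_trans (dot_diff_bound L hL u v) (mul_le_mul_of_nonneg_right ?_ dist_nonneg)
    rw [hCdef]; linarith
  have hC2 : ∀ (i : Fin (a + 1)) (u v : Fin d → ℝ),
      |L ⬝ᵥ (A i *ᵥ u) - L ⬝ᵥ (A i *ᵥ v)| ≤ C * dist u v := by
    intro i u v
    refine le_trans (dotA_diff_bound L hL (A i) (hnn i) u v)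
      (mul_le_mul_of_nonneg_right ?_ dist_nonneg)
    rw [hCdef]
    have : ∑ p, ∑ q, L p * A i p q ≤ ∑ j, ∑ p, ∑ q, L p * A j p q :=
      Finset.single_le_sum (f := fun j => ∑ p, ∑ q, L p * A j p q)
        (fun j _ => Finset.sum_nonneg fun p _ => Finset.sum_nonneg fun q _ =>
          mul_nonneg (hL p).le (hnn j p q)) (Finset.mem_univ i)
    linarith
  rw [Metric.tendstoUniformlyOn_iff]
  intro ε hε
  set E := C * (2 / m0 + 1 / minL) with hEdef
  have hE_pos : 0 < E := by rw [hEdef]; positivity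
  set δ := min (m0 / (2 * C)) (ε / (2 * E)) with hδdef
  have hδ_pos : 0 < δ := lt_min (by positivity) (by positivity)
  have hδle1 : δ ≤ m0 / (2 * C) := min_le_left _ _
  have hδle2 : δ ≤ ε / (2 * E) := min_le_right _ _
  have hδ1 : C * δ ≤ m0 / 2 := by
    have h := mul_le_mul_of_nonneg_left hδle1 hC_pos.le
    calc C * δ ≤ C * (m0 / (2 * C)) := h
      _ = m0 / 2 := by field_simp
  have hδ2 : E * δ ≤ ε / 2 := by
    have h := mul_le_mul_of_nonneg_left hδle2 hE_pos.le
    calc E * δ ≤ E * (ε / (2 * E)) := h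
      _ = ε / 2 := by field_simp
  obtain ⟨N, hN⟩ := Filter.eventually_atTop.mp ((Metric.tendstoUniformlyOn_iff.mp hunif) δ hδ_pos)
  rw [Filter.eventually_atTop]
  refine ⟨N + 1, fun n hn ω hω => ?_⟩
  set σω := (fun k => ω (k + 1)) with hσω
  have hσmem : σω ∈ OmegaR A R := sh_one_mem A R hω
  obtain ⟨nn, hnn'⟩ : ∃ nn, n = nn + 1 := ⟨n - 1, by omega⟩
  have hnnN : N ≤ nn := by omega
  set u := wordProd A σω nn *ᵥ R with hu
  have hu_nn : ∀ i, 0 ≤ u i := P_nonneg A hnn R hR.1 nn σω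
  have hu_ne : u ≠ 0 := P_ne_zero A hR hσmem nn
  set c := l1 u with hc
  have hc_pos : 0 < c := l1_pos hu_nn hu_ne
  set w := nrm u with hw
  have hwS : probVec w := nrm_probVec hu_nn hu_ne
  have hdist : dist (Vm σω) w < δ := hN nn hnnN σω hσmem
  set x1 := L ⬝ᵥ (A (ω 0) *ᵥ w) with hx1def
  set x2 := L ⬝ᵥ w with hx2def
  set y1 := L ⬝ᵥ (A (ω 0) *ᵥ Vm σω) with hy1def
  set y2 := L ⬝ᵥ Vm σω with hy2def
  have hy1 : m0 ≤ y1 := hm0_le (ω 0) σω hσmem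
  have hy2 : minL ≤ y2 := dot_ge_min (hVS σω hσmem) hU
  have hx2 : minL ≤ x2 := dot_ge_min hwS hU
  have hd1 : |x1 - y1| ≤ C * δ := by
    refine le_trans (hC2 (ω 0) w (Vm σω)) ?_
    rw [dist_comm]
    exact mul_le_mul_of_nonneg_left hdist.le hC_pos.le
  have hd2 : |x2 - y2| ≤ C * δ := by
    refine le_trans (hC1 w (Vm σω)) ?_
    rw [dist_comm]
    exact mul_le_mul_of_nonneg_left hdist.le hC_pos.le
  have hx1 : m0 / 2 ≤ x1 := by
    have h := abs_le.mp hd1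
    nlinarith [h.1, h.2, hy1, hδ1]
  have hcw : u = c • w := by
    rw [hw, nrm, ← hc, smul_smul, mul_inv_cancel₀ hc_pos.ne', one_smul]
  have hnum : L ⬝ᵥ (wordProd A ω n *ᵥ R) = c * x1 := by
    rw [hnn', P_succ_front, sh_one, ← hσω, ← hu, hcw, mulVec_smul, dotProduct_smul, smul_eq_mul,
      hx1def]
  have hden : L ⬝ᵥ (wordProd A σω (n - 1) *ᵥ R) = c * x2 := by
    rw [show n - 1 = nn from by omega, ← hu, hcw, dotProduct_smul, smul_eq_mul, hx2def]
  rw [Real.dist_eq, hnum, hden, mul_div_mul_left _ _ hc_pos.ne']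
  have hx1p : 0 < x1 := lt_of_lt_of_le (by positivity) hx1
  have hx2p : 0 < x2 := hminL_pos.trans_le hx2
  have hy1p : 0 < y1 := hm0_pos.trans_le hy1
  have hy2p : 0 < y2 := hminL_pos.trans_le hy2
  rw [Real.log_div hy1p.ne' hy2p.ne', Real.log_div hx1p.ne' hx2p.ne']
  have e1 : |Real.log x1 - Real.log y1| ≤ C * δ / (m0 / 2) := by
    refine le_trans (abs_log_sub_log_le (by positivity) hx1 (by linarith)) ?_
    gcongr
  have e2 : |Real.log x2 - Real.log y2| ≤ C * δ / minL := by
    refine le_trans (abs_log_sub_log_le hminL_pos hx2 hy2) ?_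
    gcongr
  have total : |Real.log y1 - Real.log y2 - (Real.log x1 - Real.log x2)|
      ≤ C * δ / (m0 / 2) + C * δ / minL := by
    have h3 : |Real.log y1 - Real.log y2 - (Real.log x1 - Real.log x2)|
        ≤ |Real.log y1 - Real.log x1| + |Real.log y2 - Real.log x2| := by
      have : Real.log y1 - Real.log y2 - (Real.log x1 - Real.log x2)
          = (Real.log y1 - Real.log x1) - (Real.log y2 - Real.log x2) := by ring
      rw [this]
      exact abs_sub _ _
    rw [abs_sub_comm (Real.log y1), abs_sub_comm (Real.log y2)] at h3
    linarith [e1, e2, h3]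
  have heq : C * δ / (m0 / 2) + C * δ / minL = E * δ := by
    rw [hEdef]
    field_simp
  calc |Real.log y1 - Real.log y2 - (Real.log x1 - Real.log x2)|
      ≤ E * δ := by rw [← heq]; exact total
    _ ≤ ε / 2 := hδ2
    _ < ε := by linarith

end LinRepAux

open LinRepAux in
set_option maxHeartbeats 1000000 in
/-- **Proposition 6.2.** If `Π_n(·,R)` converges uniformly on `Ω_R` to `V` with
`A(i)·V(ω) ≠ 0` for all `i, ω`, then (1) the `n`-step potentials converge uniformly on
`Ω_R` to `φ(ω) = log (Lᵀ A(ω_1) V(σ·ω) / Lᵀ V(σ·ω))`; and (2) if moreover `A_* R = R`,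
`Lᵀ R = 1` and `μ` is the linearly representable measure
`μ[w_1⋯w_n] = Lᵀ A(w_1⋯w_n) R`, then `μ` is a weak Gibbs measure for `φ`. -/
theorem linRep_weakGibbs {d a : ℕ}
    (A : Fin (a + 1) → Matrix (Fin d) (Fin d) ℝ)
    (hnn : ∀ i p q, 0 ≤ A i p q)
    (R : Fin d → ℝ) (hR : probVec R)
    (Vm : (ℕ → Fin (a + 1)) → (Fin d → ℝ))
    (hunif : TendstoUniformlyOn (fun n ω => nrm (wordProd A ω n *ᵥ R)) Vm atTop
      (OmegaR A R))
    (hAV : ∀ (i : Fin (a + 1)), ∀ ω ∈ OmegaR A R, A i *ᵥ Vm ω ≠ 0)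
    (heig : (∑ i, A i) *ᵥ R = R)
    (L : Fin d → ℝ) (hL : ∀ i, 0 < L i) (hLR : L ⬝ᵥ R = 1) :
    -- (1) uniform convergence of the n-step potentials
    TendstoUniformlyOn
      (fun n ω => Real.log ((L ⬝ᵥ (wordProd A ω n *ᵥ R)) /
        (L ⬝ᵥ (wordProd A (fun k => ω (k + 1)) (n - 1) *ᵥ R))))
      (fun ω => Real.log ((L ⬝ᵥ (A (ω 0) *ᵥ Vm fun k => ω (k + 1))) /
        (L ⬝ᵥ Vm fun k => ω (k + 1))))
      atTop (OmegaR A R) ∧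
    -- (2) the weak Gibbs property of the linearly representable measure μ
    (∀ μ : Measure (ℕ → Fin (a + 1)), IsProbabilityMeasure μ →
      (∀ (ω : ℕ → Fin (a + 1)) (n : ℕ), (μ (cylSet ω n)).toReal =
        L ⬝ᵥ (wordProd A ω n *ᵥ R)) →
      ∃ K : ℕ → ℝ, (∀ n, 0 < K n) ∧
        Tendsto (fun n : ℕ => Real.log (K n) / (n : ℝ)) atTop (nhds 0) ∧
        ∀ ω ∈ OmegaR A R, ∀ n : ℕ, 1 ≤ n →
          (K n)⁻¹ ≤ (μ (cylSet ω n)).toReal /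
              Real.exp (∑ k ∈ Finset.range n,
                Real.log ((L ⬝ᵥ (A (ω k) *ᵥ Vm fun i => ω (i + k + 1))) /
                  (L ⬝ᵥ Vm fun i => ω (i + k + 1)))) ∧
            (μ (cylSet ω n)).toReal /
              Real.exp (∑ k ∈ Finset.range n,
                Real.log ((L ⬝ᵥ (A (ω k) *ᵥ Vm fun i => ω (i + k + 1))) /
                  (L ⬝ᵥ Vm fun i => ω (i + k + 1)))) ≤ K n) := by
  classical
  rcases Set.eq_empty_or_nonempty (OmegaR A R) with hE | hNE
  · constructor
    · rw [hE]; exact tendstoUniformlyOn_empty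
    · intro μ _ _
      refine ⟨fun _ => 1, fun _ => one_pos, by simpa using tendsto_const_nhds, ?_⟩
      intro ω hω
      rw [hE] at hω
      exact absurd hω (Set.notMem_empty ω)
  have h1 := part1 A hnn R hR Vm hunif hAV L hL hNE
  refine ⟨h1, ?_⟩
  intro μ hμprob hμcyl
  -- preliminaries
  have hd : 0 < d := by
    rcases Nat.eq_zero_or_pos d with h | h
    · subst h; simpa using hR.2
    · exact h
  haveI : Nonempty (Fin d) := ⟨⟨0, hd⟩⟩
  have hU : (Finset.univ : Finset (Fin d)).Nonempty := Finset.univ_nonempty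
  set minL := Finset.univ.inf' hU L with hminLdef
  have hminL_pos : 0 < minL := by
    rw [hminLdef, Finset.lt_inf'_iff]; exact fun i _ => hL i
  have hVS : ∀ ω ∈ OmegaR A R, probVec (Vm ω) := by
    intro ω hω
    refine isClosed_probVec.mem_of_tendsto (hunif.tendsto_at hω)
      (Filter.Eventually.of_forall fun n => ?_)
    exact nrm_probVec (P_nonneg A hnn R hR.1 n ω) (P_ne_zero A hR hω n)
  have hVc : ContinuousOn Vm (OmegaR A R) :=
    hunif.continuousOn (Filter.Eventually.of_forall fun n => continuousOn_nrmP A hnn hR n).frequently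
  have hPpos : ∀ ω' ∈ OmegaR A R, ∀ m : ℕ, 0 < L ⬝ᵥ (wordProd A ω' m *ᵥ R) := fun ω' hω' m =>
    dot_pos hL (P_nonneg A hnn R hR.1 m ω') (P_ne_zero A hR hω' m)
  set g : ℕ → (ℕ → Fin (a + 1)) → ℝ := fun n ω => Real.log ((L ⬝ᵥ (wordProd A ω n *ᵥ R)) /
        (L ⬝ᵥ (wordProd A (fun k => ω (k + 1)) (n - 1) *ᵥ R))) with hgdef
  set gl : (ℕ → Fin (a + 1)) → ℝ := fun ω =>
      Real.log ((L ⬝ᵥ (A (ω 0) *ᵥ Vm fun k => ω (k + 1))) /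
        (L ⬝ᵥ Vm fun k => ω (k + 1))) with hgldef
  have hshiftc : Continuous (fun ω : ℕ → Fin (a + 1) => (fun k => ω (k + 1))) :=
    continuous_pi fun k => continuous_apply (k + 1)
  have hσmaps : Set.MapsTo (fun ω : ℕ → Fin (a + 1) => (fun k => ω (k + 1)))
      (OmegaR A R) (OmegaR A R) := fun ω hω => sh_one_mem A R hω
  have hglnum_pos : ∀ ω ∈ OmegaR A R, 0 < L ⬝ᵥ (A (ω 0) *ᵥ Vm fun k => ω (k + 1)) := by
    intro ω hω
    have hmem : (fun k => ω (k + 1)) ∈ OmegaR A R := sh_one_mem A R hω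
    exact dot_pos hL (mulVec_nonneg (hnn (ω 0)) (hVS _ hmem).1) (hAV (ω 0) _ hmem)
  have hglden_pos : ∀ ω ∈ OmegaR A R, 0 < L ⬝ᵥ Vm fun k => ω (k + 1) := by
    intro ω hω
    have hmem : (fun k => ω (k + 1)) ∈ OmegaR A R := sh_one_mem A R hω
    exact lt_of_lt_of_le hminL_pos (dot_ge_min (hVS _ hmem) hU)
  -- continuity of the n-step potentials
  have hgc : ∀ m : ℕ, ContinuousOn (g m) (OmegaR A R) := by
    intro m
    rw [hgdef]
    have hnumc : Continuous fun ω : ℕ → Fin (a + 1) => L ⬝ᵥ (wordProd A ω m *ᵥ R) :=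
      (continuous_dot L).comp (continuous_P A R m)
    have hdenc : Continuous fun ω : ℕ → Fin (a + 1) =>
        L ⬝ᵥ (wordProd A (fun k => ω (k + 1)) (m - 1) *ᵥ R) :=
      ((continuous_dot L).comp (continuous_P A R (m - 1))).comp hshiftc
    refine ContinuousOn.log (hnumc.continuousOn.div hdenc.continuousOn fun ω hω =>
      (hPpos _ (sh_one_mem A R hω) (m - 1)).ne') fun ω hω => ?_
    exact (div_pos (hPpos ω hω m) (hPpos _ (sh_one_mem A R hω) (m - 1))).ne'
  -- continuity of the limit potential
  have hVσc : ContinuousOn (fun ω : ℕ → Fin (a + 1) => Vm fun k => ω (k + 1)) (OmegaR A R) :=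
    hVc.comp hshiftc.continuousOn hσmaps
  have hglc : ContinuousOn gl (OmegaR A R) := by
    rw [hgldef]
    have hglnumc : ContinuousOn
        (fun ω : ℕ → Fin (a + 1) => L ⬝ᵥ (A (ω 0) *ᵥ Vm fun k => ω (k + 1)))
        (OmegaR A R) := by
      have heq : (fun ω : ℕ → Fin (a + 1) => L ⬝ᵥ (A (ω 0) *ᵥ Vm fun k => ω (k + 1)))
          = fun ω => ∑ p, L p * ∑ q, A (ω 0) p q * Vm (fun k => ω (k + 1)) q := by
        funext ω; simp [dotProduct, mulVec]
      rw [heq]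
      refine continuousOn_finset_sum _ fun p _ => ContinuousOn.mul continuousOn_const ?_
      refine continuousOn_finset_sum _ fun q _ => ContinuousOn.mul ?_ ?_
      · exact (Continuous.comp (continuous_of_discreteTopology (f := fun i => A i p q))
          (continuous_apply 0)).continuousOn
      · exact (continuous_apply q).comp_continuousOn hVσc
    have hgldenc : ContinuousOn
        (fun ω : ℕ → Fin (a + 1) => L ⬝ᵥ Vm fun k => ω (k + 1)) (OmegaR A R) :=
      (continuous_dot L).comp_continuousOn hVσc
    refine ContinuousOn.log (hglnumc.div hgldenc fun ω hω => (hglden_pos ω hω).ne')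
      fun ω hω => (div_pos (hglnum_pos ω hω) (hglden_pos ω hω)).ne'
  -- the deviation sequence D
  set D : ℕ → ℝ := fun n =>
    max 0 (sInf {c | ∀ ω ∈ OmegaR A R, |g n ω - gl ω| ≤ c}) with hDdef
  have hBdd : ∀ n, ∃ c, ∀ ω ∈ OmegaR A R, |g n ω - gl ω| ≤ c := by
    intro n
    have hc : ContinuousOn (fun ω => |g n ω - gl ω|) (OmegaR A R) := ((hgc n).sub hglc).abs
    obtain ⟨ω0, hω0, hmax⟩ := (isCompact_OmegaR A R).exists_isMaxOn hNE hc
    exact ⟨_, fun ω hω => hmax hω⟩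
  obtain ⟨ω₀, hω₀⟩ := hNE
  have hBddBelow : ∀ n, BddBelow {c | ∀ ω ∈ OmegaR A R, |g n ω - gl ω| ≤ c} := fun n =>
    ⟨0, fun c hc => le_trans (abs_nonneg _) (hc ω₀ hω₀)⟩
  have hD0 : ∀ n, 0 ≤ D n := fun n => le_max_left _ _
  have hDspec : ∀ n, ∀ ω ∈ OmegaR A R, |g n ω - gl ω| ≤ D n := by
    intro n ω hω
    refine le_trans (le_csInf (hBdd n) fun b hb => hb ω hω) (le_max_right _ _)
  have hDlim : Tendsto D atTop (𝓝 0) := by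
    rw [Metric.tendsto_atTop]
    intro ε hε
    obtain ⟨N, hN⟩ := Filter.eventually_atTop.mp
      ((Metric.tendstoUniformlyOn_iff.mp h1) (ε / 2) (by positivity))
    refine ⟨N, fun n hn => ?_⟩
    have hmem : (ε / 2) ∈ {c | ∀ ω ∈ OmegaR A R, |g n ω - gl ω| ≤ c} := by
      intro ω hω
      have hdlt := hN n hn ω hω
      rw [Real.dist_eq] at hdlt
      rw [abs_sub_comm]
      exact hdlt.le
    have hD_le : D n ≤ ε / 2 := max_le (by positivity) (csInf_le (hBddBelow n) hmem)
    rw [Real.dist_eq, sub_zero, abs_of_nonneg (hD0 n)]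
    linarith
  -- the constants K
  refine ⟨fun n => Real.exp (∑ k ∈ Finset.range n, D (k + 1)), fun n => Real.exp_pos _,
    ?_, ?_⟩
  · have hcesaro := (hDlim.comp (tendsto_add_atTop_nat 1)).cesaro
    refine hcesaro.congr fun n => ?_
    rw [Real.log_exp]
    simp [smul_eq_mul, Function.comp, div_eq_inv_mul]
  · intro ω hω n hn1
    have hF0 : Real.log (L ⬝ᵥ (wordProd A (sh 0 ω) (n - 0) *ᵥ R))
        = Real.log (L ⬝ᵥ (wordProd A ω n *ᵥ R)) := by rw [sh_zero]; norm_num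
    have hFn : Real.log (L ⬝ᵥ (wordProd A (sh n ω) (n - n) *ᵥ R)) = 0 := by
      rw [Nat.sub_self, wordProd_zero, one_mulVec, hLR, Real.log_one]
    have hterm : ∀ k ∈ Finset.range n,
        Real.log (L ⬝ᵥ (wordProd A (sh k ω) (n - k) *ᵥ R))
          - Real.log (L ⬝ᵥ (wordProd A (sh (k + 1) ω) (n - (k + 1)) *ᵥ R))
        = g (n - k) (sh k ω) := by
      intro k hk
      have hm : sh k ω ∈ OmegaR A R := sh_mem A R hω k
      have hm1 : sh (k + 1) ω ∈ OmegaR A R := sh_mem A R hω (k + 1)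
      have hnum := hPpos (sh k ω) hm (n - k)
      have hden := hPpos (sh (k + 1) ω) hm1 (n - (k + 1))
      rw [hgdef]
      simp only []
      have e1 : (fun j => sh k ω (j + 1)) = sh (k + 1) ω := by
        rw [← sh_sh]; rfl
      rw [e1, show n - k - 1 = n - (k + 1) from by omega,
        Real.log_div hnum.ne' hden.ne']
    have hglterm : ∀ k : ℕ,
        Real.log ((L ⬝ᵥ (A (ω k) *ᵥ Vm fun i => ω (i + k + 1))) /
          (L ⬝ᵥ Vm fun i => ω (i + k + 1))) = gl (sh k ω) := by
      intro k
      have e2 : (fun j => sh k ω (j + 1)) = (fun i => ω (i + k + 1)) := by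
        funext j; show ω (j + 1 + k) = ω (j + k + 1); congr 1; omega
      have e3 : sh k ω 0 = ω k := by show ω (0 + k) = ω k; congr 1; omega
      rw [hgldef]
      simp only []
      rw [e2, e3]
    have hμval : (μ (cylSet ω n)).toReal = L ⬝ᵥ (wordProd A ω n *ᵥ R) := hμcyl ω n
    set Sφ := ∑ k ∈ Finset.range n,
      Real.log ((L ⬝ᵥ (A (ω k) *ᵥ Vm fun i => ω (i + k + 1))) /
        (L ⬝ᵥ Vm fun i => ω (i + k + 1))) with hSφdef
    have hSφ_eq : Sφ = ∑ k ∈ Finset.range n, gl (sh k ω) :=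
      Finset.sum_congr rfl fun k _ => hglterm k
    have hlogμ : Real.log ((μ (cylSet ω n)).toReal)
        = ∑ k ∈ Finset.range n, g (n - k) (sh k ω) := by
      rw [hμval]
      calc Real.log (L ⬝ᵥ (wordProd A ω n *ᵥ R))
          = Real.log (L ⬝ᵥ (wordProd A (sh 0 ω) (n - 0) *ᵥ R))
            - Real.log (L ⬝ᵥ (wordProd A (sh n ω) (n - n) *ᵥ R)) := by
            rw [hF0, hFn, sub_zero]
        _ = ∑ k ∈ Finset.range n,
            (Real.log (L ⬝ᵥ (wordProd A (sh k ω) (n - k) *ᵥ R))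
              - Real.log (L ⬝ᵥ (wordProd A (sh (k + 1) ω) (n - (k + 1)) *ᵥ R))) :=
            (Finset.sum_range_sub' (fun k =>
              Real.log (L ⬝ᵥ (wordProd A (sh k ω) (n - k) *ᵥ R))) n).symm
        _ = ∑ k ∈ Finset.range n, g (n - k) (sh k ω) :=
            Finset.sum_congr rfl hterm
    have hdiff : |Real.log ((μ (cylSet ω n)).toReal) - Sφ|
        ≤ ∑ k ∈ Finset.range n, D (k + 1) := by
      rw [hlogμ, hSφ_eq, ← Finset.sum_sub_distrib]
      refine le_trans (Finset.abs_sum_le_sum_abs _ _) ?_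
      have h4 : ∀ k ∈ Finset.range n, |g (n - k) (sh k ω) - gl (sh k ω)| ≤ D (n - k) :=
        fun k hk => hDspec (n - k) (sh k ω) (sh_mem A R hω k)
      refine le_trans (Finset.sum_le_sum h4) (le_of_eq ?_)
      have hrefl := Finset.sum_range_reflect (fun j => D (j + 1)) n
      rw [← hrefl]
      refine Finset.sum_congr rfl fun j hj => ?_
      have := Finset.mem_range.mp hj
      congr 1
      omega
    have hμpos : 0 < (μ (cylSet ω n)).toReal := by
      rw [hμval]; exact hPpos ω hω n
    have hexp : (μ (cylSet ω n)).toReal / Real.exp Sφ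
        = Real.exp (Real.log ((μ (cylSet ω n)).toReal) - Sφ) := by
      rw [Real.exp_sub, Real.exp_log hμpos]
    have habs := abs_le.mp hdiff
    constructor
    · rw [hexp, show (Real.exp (∑ k ∈ Finset.range n, D (k + 1)))⁻¹
        = Real.exp (-(∑ k ∈ Finset.range n, D (k + 1))) from (Real.exp_neg _).symm]
      exact Real.exp_le_exp.mpr (by linarith [habs.1])
    · rw [hexp]
      exact le_trans (Real.exp_le_exp.mpr habs.2) (le_of_eq rfl)
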